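/- (Admissibility of the A-star heuristic.) Define h(U) = Σ over x ∉ U of d(x, univ \ {x}). For every finite set U of variables and every duplicate-free list M enumerating exactly the set univ \ U, one has h(U) ≤ Σ over positions k of d(M_k, U ∪ S_k), where S_k is the set of entries of M preceding position k. That is, h(U) never exceeds the length of any path from the lattice node U to the sink, so h underestimates the true remaining cost. -/
import Mathlib


/-- `d s x U` : the score of selecting optimal parents of `x` from `U`,
defined as the minimum of `s x W` over all subsets `W ⊆ U`. -/
noncomputable def d {X : Type*} [DecidableEq X] (s : X → Finset X → ℝ)
    (x : X) (U : Finset X) : ℝ :=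
  U.powerset.inf' (Finset.powerset_nonempty U) (s x)

/-- `Qfrom s M U` : the cost of extending the lattice node `U` along the
ordering `M`, i.e. `Σ_k d(M_k, U ∪ S_k)` where `S_k` is the set of entries
of `M` preceding position `k`. -/
noncomputable def Qfrom {X : Type*} [DecidableEq X] (s : X → Finset X → ℝ) :
    List X → Finset X → ℝ
  | [], _ => 0
  | x :: M, U => d s x U + Qfrom s M (insert x U)

/-- `Q s L` : the cost of the ordering `L`, i.e. `Σ_k d(L_k, S_k)` where
`S_k` is the set of entries of `L` preceding position `k`; this is the score
of the network in which each variable's parents are chosen optimally from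
its predecessors in `L`. -/
noncomputable def Q {X : Type*} [DecidableEq X] (s : X → Finset X → ℝ)
    (L : List X) : ℝ :=
  Qfrom s L ∅

lemma d_anti {X : Type*} [DecidableEq X] (s : X → Finset X → ℝ)
    (x : X) {U V : Finset X} (h : U ⊆ V) : d s x V ≤ d s x U := by
  exact Finset.inf'_mono _ (fun W hW => Finset.mem_powerset.mpr ((Finset.mem_powerset.mp hW).trans h)) _

lemma astar_aux {X : Type*} [Fintype X] [DecidableEq X]
    (s : X → Finset X → ℝ) (M : List X) :
    ∀ U : Finset X, M.Nodup → M.toFinset = Finset.univ \ U →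
    (∑ y ∈ Finset.univ \ U, d s y (Finset.univ \ {y})) ≤ Qfrom s M U := by
  induction M with
  | nil =>
    intro U _ hMset
    simp only [List.toFinset_nil] at hMset
    rw [← hMset]
    simp [Qfrom]
  | cons x M ih =>
    intro U hM hMset
    simp only [List.toFinset_cons] at hMset
    have hxM : x ∉ M := (List.nodup_cons.mp hM).1
    have hx : x ∈ Finset.univ \ U := by
      rw [← hMset]; exact Finset.mem_insert_self x _
    have hxU : x ∉ U := (Finset.mem_sdiff.mp hx).2
    have hM' : M.toFinset = Finset.univ \ insert x U := by
      have : M.toFinset = (insert x M.toFinset).erase x := by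
        rw [Finset.erase_insert (by simpa using hxM)]
      rw [this, hMset]
      ext y; simp [not_or]
    have hsplit : Finset.univ \ U = insert x (Finset.univ \ insert x U) := by
      rw [← hM', ← hMset]
    rw [hsplit, Finset.sum_insert (by rw [← hM']; simpa using hxM)]
    simp only [Qfrom]
    gcongr
    · exact d_anti s x (Finset.subset_sdiff.mpr ⟨Finset.subset_univ U, by
        simpa using hxU⟩)
    · exact ih (insert x U) (List.nodup_cons.mp hM).2 hM'

/-- Admissibility of the A-star heuristic: `h(U) = Σ_{x ∉ U} d(x, univ \ {x})`
never exceeds the cost `Σ_k d(M_k, U ∪ S_k)` of any path from the lattice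
node `U` to the sink, given by a duplicate-free list `M` enumerating exactly
`univ \ U`. -/
theorem astar_heuristic_admissible
    {X : Type*} [Fintype X] [DecidableEq X] [Nonempty X]
    (s : X → Finset X → ℝ) (U : Finset X) (M : List X)
    (hM : M.Nodup) (hMset : M.toFinset = Finset.univ \ U) :
    (∑ y ∈ Finset.univ \ U, d s y (Finset.univ \ {y})) ≤ Qfrom s M U :=
  astar_aux s M U hM hMset
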